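/- If a mixed four-partite state ρ on H₁^{d₁}⊗H₂^{d₂}⊗H₃^{d₃}⊗H₄^{d₄} is separable under the bipartition fg|he (with d_f ≤ d_g and d_h ≤ d_e), then the matrix S(ρ_{fg|he}) = [[1, (T^{(he)})ᵗ],[T^{(fg)}, T^{(fghe)}]] satisfies ‖S(ρ_{fg|he})‖_tr ≤ √((5d_g²−4)(5d_e²−4))/(d_g d_e). -/

import Mathlib

open Matrix BigOperators
open scoped Kronecker ComplexOrder

/-- The positive semidefinite square root of a positive semidefinite matrix
(the definition Mathlib had as `Matrix.PosSemidef.sqrt`, since removed). -/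
noncomputable def Matrix.PosSemidef.sqrt {n : Type*} [Fintype n] [DecidableEq n] {𝕜 : Type*} [RCLike 𝕜]
    {A : Matrix n n 𝕜} (hA : A.PosSemidef) : Matrix n n 𝕜 :=
  hA.1.eigenvectorUnitary.1 * diagonal ((↑) ∘ (√·) ∘ hA.1.eigenvalues) *
  (star hA.1.eigenvectorUnitary : Matrix n n 𝕜)

/-- Trace (nuclear) norm of a real rectangular matrix: tr √(AᵀA). -/
noncomputable def traceNorm {m n : Type*} [Fintype m] [Fintype n] [DecidableEq n]
    (A : Matrix m n ℝ) : ℝ :=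
  (Matrix.posSemidef_conjTranspose_mul_self A).sqrt.trace


lemma bessel_raw {ι κ : Type*} [Fintype ι] [Fintype κ]
    (w : κ → ι → ℝ) (u : ι → ℝ)
    (horth : ∀ j k, j ≠ k → ∑ i, w j i * w k i = 0)
    (hnorm : ∀ k, ∑ i, (w k i)^2 ≤ 1) :
    ∑ k, (∑ i, u i * w k i)^2 ≤ ∑ i, (u i)^2 := by
  set c : κ → ℝ := fun k => ∑ i, u i * w k i with hc
  have key : 0 ≤ ∑ i, (u i - ∑ k, c k * w k i)^2 :=
    Finset.sum_nonneg (fun i _ => sq_nonneg _)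
  have e1 : ∑ i, u i * (∑ k, c k * w k i) = ∑ k, c k ^ 2 := by
    simp_rw [Finset.mul_sum]
    rw [Finset.sum_comm]
    refine Finset.sum_congr rfl fun k _ => ?_
    calc ∑ i, u i * (c k * w k i) = c k * ∑ i, u i * w k i := by
          rw [Finset.mul_sum]; exact Finset.sum_congr rfl fun i _ => by ring
      _ = c k ^ 2 := by simp only [hc]; ring
  have e2 : ∑ i, (∑ k, c k * w k i)^2 = ∑ k, c k ^ 2 * (∑ i, (w k i)^2) := by
    simp_rw [sq, Finset.sum_mul_sum]
    rw [Finset.sum_comm]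
    refine Finset.sum_congr rfl fun j _ => ?_
    rw [Finset.sum_comm]
    rw [Finset.sum_eq_single j]
    · rw [Finset.mul_sum]
      refine Finset.sum_congr rfl fun i _ => by ring
    · intro k _ hk
      have : ∑ i, w j i * w k i = 0 := horth j k (fun h => hk h.symm)
      calc ∑ i, c j * w j i * (c k * w k i) = c j * c k * ∑ i, w j i * w k i := by
            rw [Finset.mul_sum]; exact Finset.sum_congr rfl fun i _ => by ring
        _ = 0 := by rw [this, mul_zero]
    · simp
  have e3 : ∑ k, c k ^ 2 * (∑ i, (w k i)^2) ≤ ∑ k, c k ^ 2 := by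
    refine Finset.sum_le_sum fun k _ => ?_
    exact mul_le_of_le_one_right (sq_nonneg _) (hnorm k)
  have expand : ∑ i, (u i - ∑ k, c k * w k i)^2
      = ∑ i, (u i)^2 - 2 * ∑ k, c k ^ 2 + ∑ k, c k ^ 2 * (∑ i, (w k i)^2) := by
    simp_rw [sub_sq]
    rw [Finset.sum_add_distrib, Finset.sum_sub_distrib, e2, ← e1, Finset.mul_sum]
    congr 2
    exact Finset.sum_congr rfl fun i _ => by ring
  rw [expand] at key
  linarith

lemma sum_mul_le_sqrt {ι : Type*} [Fintype ι] (x y : ι → ℝ) :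
    ∑ i, x i * y i ≤ Real.sqrt (∑ i, (x i)^2) * Real.sqrt (∑ i, (y i)^2) := by
  have h := Finset.sum_mul_sq_le_sq_mul_sq Finset.univ x y
  calc ∑ i, x i * y i ≤ |∑ i, x i * y i| := le_abs_self _
    _ = Real.sqrt ((∑ i, x i * y i)^2) := (Real.sqrt_sq_eq_abs _).symm
    _ ≤ Real.sqrt ((∑ i, (x i)^2) * (∑ i, (y i)^2)) := Real.sqrt_le_sqrt h
    _ = _ := Real.sqrt_mul (Finset.sum_nonneg fun i _ => sq_nonneg _) _


lemma trace_sqrt_eq {n : Type*} [Fintype n] [DecidableEq n] {G : Matrix n n ℝ}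
    (hG : G.PosSemidef) :
    hG.sqrt.trace = ∑ k, Real.sqrt (hG.1.eigenvalues k) := by
  rw [Matrix.PosSemidef.sqrt, Matrix.trace_mul_cycle, Unitary.coe_star_mul_self, one_mul,
    Matrix.trace_diagonal]
  rfl

section core
variable {m n : Type*} [Fintype m] [Fintype n] [DecidableEq n]

lemma key1_aux (A : Matrix m n ℝ) (j k : n) :
    let hG := Matrix.posSemidef_conjTranspose_mul_self A
    let U : Matrix n n ℝ := hG.1.eigenvectorUnitary
    ∑ i, A.mulVec (fun a => U a j) i * A.mulVec (fun a => U a k) i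
      = if j = k then hG.1.eigenvalues j else 0 := by
  intro hG U
  have hdiag : star (U : Matrix n n ℝ) * (Aᴴ * A) * U = diagonal (RCLike.ofReal ∘ hG.1.eigenvalues) := by
    have := hG.1.conjStarAlgAut_star_eigenvectorUnitary
    rwa [Unitary.conjStarAlgAut_star_apply] at this
  have hent : (star (U : Matrix n n ℝ) * (Aᴴ * A) * U) j k
      = if j = k then hG.1.eigenvalues j else 0 := by
    rw [hdiag]
    by_cases h : j = k <;> simp [Matrix.diagonal_apply, h]
  rw [← hent]
  trans ∑ a, ∑ b, (U a j * U b k) * ∑ i, A i a * A i b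
  · simp only [Matrix.mulVec, dotProduct]
    simp_rw [Finset.sum_mul_sum]
    rw [Finset.sum_comm]
    refine Finset.sum_congr rfl fun a _ => ?_
    rw [Finset.sum_comm]
    refine Finset.sum_congr rfl fun b _ => ?_
    rw [Finset.mul_sum]
    exact Finset.sum_congr rfl fun i _ => by ring
  · simp only [Matrix.mul_apply, Matrix.star_apply, star_trivial,
      Matrix.conjTranspose_apply]
    rw [Finset.sum_comm]
    refine Finset.sum_congr rfl fun b _ => ?_
    rw [Finset.sum_mul]
    refine Finset.sum_congr rfl fun a _ => ?_
    rw [Finset.mul_sum, Finset.mul_sum, Finset.sum_mul]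
    exact Finset.sum_congr rfl fun i _ => by ring

end core

section core2
variable {m n : Type*} [Fintype m] [Fintype n] [DecidableEq n]

lemma sum_factor {ι : Type*} [Fintype ι] (a : ℝ) (f g : ι → ℝ) :
    ∑ i, f i * (a * g i) = a * ∑ i, g i * f i := by
  rw [Finset.mul_sum]; exact Finset.sum_congr rfl fun i _ => by ring

lemma traceNorm_le_of_decomp {L : ℕ} (c : Fin L → ℝ) (hc : ∀ l, 0 ≤ c l)
    (u : Fin L → m → ℝ) (v : Fin L → n → ℝ) :
    traceNorm (∑ l, c l • Matrix.vecMulVec (u l) (v l)) ≤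
      ∑ l, c l * Real.sqrt (∑ i, (u l i)^2) * Real.sqrt (∑ j, (v l j)^2) := by
  set A : Matrix m n ℝ := ∑ l, c l • Matrix.vecMulVec (u l) (v l) with hA
  have hAapp : ∀ i j, A i j = ∑ l, c l * u l i * v l j := by
    intro i j
    rw [hA]
    simp [Matrix.sum_apply, Matrix.vecMulVec_apply, mul_assoc]
  set hG := Matrix.posSemidef_conjTranspose_mul_self A with hGdef
  set d : n → ℝ := hG.1.eigenvalues with hd
  set U : Matrix n n ℝ := (hG.1.eigenvectorUnitary : Matrix n n ℝ) with hU
  have hd0 : ∀ k, 0 ≤ d k := hG.eigenvalues_nonneg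
  set Aq : n → m → ℝ := fun k => A.mulVec (fun a => U a k) with hAqdef
  have key1 : ∀ j k, ∑ i, Aq j i * Aq k i = if j = k then d j else 0 := by
    intro j k; exact key1_aux A j k
  have hUU : U * star U = 1 :=
    (Matrix.mem_unitaryGroup_iff).mp hG.1.eigenvectorUnitary.2
  have hrow : ∀ a b, ∑ k, U a k * U b k = if a = b then (1:ℝ) else 0 := by
    intro a b
    have h := congrFun (congrFun (congrArg (fun M => (M : Matrix n n ℝ)) hUU) a) b
    simpa [Matrix.mul_apply, Matrix.star_apply, star_trivial, Matrix.one_apply] using h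
  have hvq : ∀ (vv : n → ℝ), ∑ k, (∑ b, vv b * U b k)^2 = ∑ b, (vv b)^2 := by
    intro vv
    calc ∑ k, (∑ b, vv b * U b k)^2
        = ∑ k, ∑ a, ∑ b, (vv a * U a k) * (vv b * U b k) := by
          simp_rw [sq, Finset.sum_mul_sum]
      _ = ∑ a, ∑ b, (vv a * vv b) * ∑ k, U a k * U b k := by
          rw [Finset.sum_comm]
          refine Finset.sum_congr rfl fun a _ => ?_
          rw [Finset.sum_comm]
          refine Finset.sum_congr rfl fun b _ => ?_
          rw [Finset.mul_sum]
          exact Finset.sum_congr rfl fun k _ => by ring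
      _ = ∑ a, (vv a)^2 := by
          refine Finset.sum_congr rfl fun a _ => ?_
          rw [Finset.sum_eq_single a]
          · rw [hrow a a, if_pos rfl]; ring
          · intro b _ hb
            rw [hrow a b, if_neg (fun h => hb h.symm), mul_zero]
          · simp
  set w : n → m → ℝ := fun k i => (Real.sqrt (d k))⁻¹ * Aq k i with hw
  have hAq0 : ∀ k, d k = 0 → ∀ i, Aq k i = 0 := by
    intro k hk i
    have h := key1 k k
    rw [if_pos rfl, hk] at h
    have h2 : ∑ i, (Aq k i)^2 = 0 := by
      rw [← h]; exact Finset.sum_congr rfl fun i _ => (sq (Aq k i)).symm ▸ (by ring)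
    have h3 := (Finset.sum_eq_zero_iff_of_nonneg
      (fun i _ => sq_nonneg (Aq k i))).mp h2 i (Finset.mem_univ i)
    exact pow_eq_zero_iff (two_ne_zero) |>.mp h3
  have horth : ∀ j k, j ≠ k → ∑ i, w j i * w k i = 0 := by
    intro j k hjk
    calc ∑ i, w j i * w k i
        = (Real.sqrt (d j))⁻¹ * (Real.sqrt (d k))⁻¹ * ∑ i, Aq j i * Aq k i := by
          rw [Finset.mul_sum]; exact Finset.sum_congr rfl fun i _ => by rw [hw]; ring
      _ = 0 := by rw [key1 j k, if_neg hjk, mul_zero]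
  have hwnorm : ∀ k, ∑ i, (w k i)^2 ≤ 1 := by
    intro k
    by_cases hk : d k = 0
    · have : ∀ i, w k i = 0 := fun i => by rw [hw]; simp [hAq0 k hk i]
      simp [this]
    · have hsum : ∑ i, (w k i)^2 = ((Real.sqrt (d k))⁻¹)^2 * ∑ i, (Aq k i)^2 := by
        rw [Finset.mul_sum]; exact Finset.sum_congr rfl fun i _ => by rw [hw]; ring
      have h2 : ∑ i, (Aq k i)^2 = d k := by
        have h := key1 k k; rw [if_pos rfl] at h
        rw [← h]; exact Finset.sum_congr rfl fun i _ => by ring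
      rw [hsum, h2, inv_pow, Real.sq_sqrt (hd0 k), inv_mul_cancel₀ hk]
  have hkey : ∀ k, Real.sqrt (d k) = ∑ i, w k i * Aq k i := by
    intro k
    have h2 : ∑ i, (Aq k i)^2 = d k := by
      have h := key1 k k; rw [if_pos rfl] at h
      rw [← h]; exact Finset.sum_congr rfl fun i _ => by ring
    have hsum : ∑ i, w k i * Aq k i = (Real.sqrt (d k))⁻¹ * ∑ i, (Aq k i)^2 := by
      rw [Finset.mul_sum]; exact Finset.sum_congr rfl fun i _ => by rw [hw]; ring
    rw [hsum, h2]
    by_cases hk : d k = 0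
    · simp [hk]
    · have hdk : 0 < d k := lt_of_le_of_ne (hd0 k) (Ne.symm hk)
      have hs : Real.sqrt (d k) ≠ 0 := ne_of_gt (Real.sqrt_pos.mpr hdk)
      field_simp
      exact Real.sq_sqrt (hd0 k)
  -- decomposition of Aq
  have hAq_decomp : ∀ k i, Aq k i = ∑ l, c l * (∑ b, v l b * U b k) * u l i := by
    intro k i
    rw [hAqdef]
    simp only [Matrix.mulVec, dotProduct]
    calc ∑ b, A i b * U b k = ∑ b, ∑ l, c l * u l i * v l b * U b k := by
          refine Finset.sum_congr rfl fun b _ => ?_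
          rw [hAapp, Finset.sum_mul]
      _ = ∑ l, c l * (∑ b, v l b * U b k) * u l i := by
          rw [Finset.sum_comm]
          refine Finset.sum_congr rfl fun l _ => ?_
          calc ∑ b, c l * u l i * v l b * U b k
              = c l * u l i * ∑ b, v l b * U b k := by
                rw [Finset.mul_sum]; exact Finset.sum_congr rfl fun b _ => by ring
            _ = c l * (∑ b, v l b * U b k) * u l i := by ring
  have hsw : ∀ k, ∑ i, w k i * Aq k i
      = ∑ l, c l * (∑ b, v l b * U b k) * (∑ i, u l i * w k i) := by
    intro k
    calc ∑ i, w k i * Aq k i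
        = ∑ i, ∑ l, w k i * (c l * (∑ b, v l b * U b k) * u l i) := by
          refine Finset.sum_congr rfl fun i _ => ?_
          rw [hAq_decomp, Finset.mul_sum]
      _ = ∑ l, c l * (∑ b, v l b * U b k) * (∑ i, u l i * w k i) := by
          rw [Finset.sum_comm]
          refine Finset.sum_congr rfl fun l _ => ?_
          exact sum_factor _ (w k) (u l)
  have tn : traceNorm A = ∑ k, Real.sqrt (d k) := trace_sqrt_eq hG
  rw [tn]
  calc ∑ k, Real.sqrt (d k)
      = ∑ k, ∑ l, c l * (∑ b, v l b * U b k) * (∑ i, u l i * w k i) := by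
        refine Finset.sum_congr rfl fun k _ => ?_
        rw [hkey k, hsw k]
    _ = ∑ l, ∑ k, c l * (∑ b, v l b * U b k) * (∑ i, u l i * w k i) := Finset.sum_comm
    _ ≤ ∑ l, c l * Real.sqrt (∑ i, (u l i)^2) * Real.sqrt (∑ j, (v l j)^2) := by
        refine Finset.sum_le_sum fun l _ => ?_
        have h1 : ∑ k, c l * (∑ b, v l b * U b k) * (∑ i, u l i * w k i)
            = c l * ∑ k, (∑ b, v l b * U b k) * (∑ i, u l i * w k i) := by
          rw [Finset.mul_sum]; exact Finset.sum_congr rfl fun k _ => by ring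
        rw [h1, mul_assoc]
        refine mul_le_mul_of_nonneg_left ?_ (hc l)
        calc ∑ k, (∑ b, v l b * U b k) * (∑ i, u l i * w k i)
            ≤ Real.sqrt (∑ k, (∑ b, v l b * U b k)^2)
              * Real.sqrt (∑ k, (∑ i, u l i * w k i)^2) := sum_mul_le_sqrt _ _
          _ ≤ Real.sqrt (∑ b, (v l b)^2) * Real.sqrt (∑ i, (u l i)^2) := by
              refine mul_le_mul ?_ ?_ (Real.sqrt_nonneg _) (Real.sqrt_nonneg _)
              · exact le_of_eq (by rw [hvq (v l)])
              · exact Real.sqrt_le_sqrt (bessel_raw w (u l) horth hwnorm)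
          _ = Real.sqrt (∑ i, (u l i)^2) * Real.sqrt (∑ j, (v l j)^2) := mul_comm _ _

end core2


/-- purity bound -/
lemma purity_le_one {N : Type*} [Fintype N] [DecidableEq N] {σ : Matrix N N ℂ}
    (h1 : σ.PosSemidef) (h2 : σ.trace = 1) : ((σᴴ * σ).trace).re ≤ 1 := by
  have hh := h1.1
  set U : Matrix N N ℂ := (hh.eigenvectorUnitary : Matrix N N ℂ) with hU
  set μ := hh.eigenvalues with hμ
  have hspec := hh.spectral_theorem
  rw [Unitary.conjStarAlgAut_apply] at hspec
  have hsU : star U * U = 1 := Unitary.coe_star_mul_self hh.eigenvectorUnitary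
  set D : Matrix N N ℂ := Matrix.diagonal (RCLike.ofReal ∘ μ) with hD
  have hσσ : σᴴ * σ = U * (D * D) * star U := by
    rw [hh.eq]
    calc σ * σ = (U * D * star U) * (U * D * star U) := by rw [← hspec]
      _ = U * D * (star U * U) * D * star U := by simp only [Matrix.mul_assoc]
      _ = U * (D * D) * star U := by
          rw [hsU, Matrix.mul_one]; simp only [Matrix.mul_assoc]
  have htr : (σᴴ * σ).trace = ∑ k, ((μ k : ℂ))^2 := by
    rw [hσσ, Matrix.trace_mul_cycle, hsU, Matrix.one_mul]
    rw [hD, Matrix.diagonal_mul_diagonal, Matrix.trace_diagonal]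
    exact Finset.sum_congr rfl fun k _ => by simp [sq]
  have htrσ : σ.trace = ∑ k, (μ k : ℂ) := by
    rw [hspec, Matrix.trace_mul_cycle, hsU, Matrix.one_mul, Matrix.trace_diagonal]
    rfl
  have hμsum : ∑ k, μ k = 1 := by
    have : ((∑ k, μ k : ℝ) : ℂ) = 1 := by rw [Complex.ofReal_sum] at *; rw [← htrσ, h2]
    exact_mod_cast this
  have hμ0 : ∀ k, 0 ≤ μ k := h1.eigenvalues_nonneg
  have hre : ((σᴴ * σ).trace).re = ∑ k, (μ k)^2 := by
    rw [htr]
    rw [Complex.re_sum]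
    exact Finset.sum_congr rfl fun k _ => by
      rw [← Complex.ofReal_pow, Complex.ofReal_re]
  rw [hre]
  calc ∑ k, (μ k)^2 ≤ ∑ k, μ k := by
        refine Finset.sum_le_sum fun k _ => ?_
        have hle : μ k ≤ 1 := by
          rw [← hμsum]
          exact Finset.single_le_sum (fun i _ => hμ0 i) (Finset.mem_univ k)
        nlinarith [hμ0 k]
    _ = 1 := hμsum

noncomputable def toR {N : Type*} (M : Matrix N N ℂ) : (N × N) × Bool → ℝ :=
  fun x => if x.2 then (M x.1.1 x.1.2).im else (M x.1.1 x.1.2).re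

lemma ip_eq {N : Type*} [Fintype N] [DecidableEq N] (A B : Matrix N N ℂ) :
    ∑ x : (N × N) × Bool, toR A x * toR B x = ((Aᴴ * B).trace).re := by
  have hrhs : ((Aᴴ * B).trace).re
      = ∑ j, ∑ i, ((A i j).re * (B i j).re + (A i j).im * (B i j).im) := by
    rw [Matrix.trace]
    simp only [Matrix.diag_apply, Matrix.mul_apply, Matrix.conjTranspose_apply]
    rw [Complex.re_sum]
    refine Finset.sum_congr rfl fun j _ => ?_
    rw [Complex.re_sum]
    refine Finset.sum_congr rfl fun i _ => ?_
    simp [Complex.mul_re]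
  rw [hrhs, Fintype.sum_prod_type]
  trans ∑ x : N × N, ((A x.1 x.2).re * (B x.1 x.2).re + (A x.1 x.2).im * (B x.1 x.2).im)
  · refine Finset.sum_congr rfl fun x _ => ?_
    simp [toR]
    ring
  · rw [Fintype.sum_prod_type]
    rw [Finset.sum_comm]

lemma ip_smul' {N : Type*} [Fintype N] [DecidableEq N] (b : ℝ) (P Q : Matrix N N ℂ) :
    ∑ x : (N × N) × Bool, toR P x * (b * toR Q x) = b * ((Pᴴ * Q).trace).re := by
  rw [← ip_eq, Finset.mul_sum]
  exact Finset.sum_congr rfl fun x _ => by ring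

lemma ip_smul {N : Type*} [Fintype N] [DecidableEq N] (a b : ℝ) (P Q : Matrix N N ℂ) :
    ∑ x : (N × N) × Bool, (a * toR P x) * (b * toR Q x) = a * b * ((Pᴴ * Q).trace).re := by
  rw [← ip_eq, Finset.mul_sum]
  exact Finset.sum_congr rfl fun x _ => by ring

lemma kron_herm {N1 N2 : Type*} {X : Matrix N1 N1 ℂ} {Y : Matrix N2 N2 ℂ}
    (hX : X.IsHermitian) (hY : Y.IsHermitian) : (X ⊗ₖ Y).IsHermitian := by
  ext ⟨a1, a2⟩ ⟨b1, b2⟩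
  simp only [Matrix.conjTranspose_apply, Matrix.kroneckerMap_apply, star_mul']
  have h1 : star (X b1 a1) = X a1 b1 := by
    calc star (X b1 a1) = Xᴴ a1 b1 := (Matrix.conjTranspose_apply _ _ _).symm
      _ = X a1 b1 := by rw [hX]
  have h2 : star (Y b2 a2) = Y a2 b2 := by
    calc star (Y b2 a2) = Yᴴ a2 b2 := (Matrix.conjTranspose_apply _ _ _).symm
      _ = Y a2 b2 := by rw [hY]
  rw [h1, h2, mul_comm]

lemma trace_mul_herm_real {N : Type*} [Fintype N] {A B : Matrix N N ℂ}
    (hA : A.IsHermitian) (hB : B.IsHermitian) :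
    (A * B).trace = (((A * B).trace).re : ℂ) := by
  have h : star ((A * B).trace) = (A * B).trace := by
    rw [← Matrix.trace_conjTranspose, Matrix.conjTranspose_mul, hA.eq, hB.eq,
      Matrix.trace_mul_comm]
  exact (Complex.conj_eq_iff_re.mp h).symm

lemma bip_bound {da db : ℕ} {ιa ιb : Type*} [Fintype ιa] [Fintype ιb]
    [DecidableEq ιa] [DecidableEq ιb]
    (hda : 0 < da) (hdb : 0 < db)
    (lamA : ιa → Matrix (Fin da) (Fin da) ℂ)
    (lamB : ιb → Matrix (Fin db) (Fin db) ℂ)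
    (hAherm : ∀ i, (lamA i).IsHermitian) (hAtr : ∀ i, (lamA i).trace = 0)
    (hAorth : ∀ i j, (lamA i * lamA j).trace = if i = j then 2 else 0)
    (hBherm : ∀ i, (lamB i).IsHermitian) (hBtr : ∀ i, (lamB i).trace = 0)
    (hBorth : ∀ i j, (lamB i * lamB j).trace = if i = j then 2 else 0)
    (σ : Matrix (Fin da × Fin db) (Fin da × Fin db) ℂ)
    (hσ : σ.PosSemidef) (hσtr : σ.trace = 1) :
    ∑ i, ∑ j, (((σ * (lamA i ⊗ₖ lamB j)).trace).re)^2 ≤ 4 - 4/((da : ℝ) * db) := by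
  have hcardpos : (0:ℝ) < (da : ℝ) * db := by positivity
  set s : ℝ := Real.sqrt ((da : ℝ) * db) with hs
  have hspos : 0 < s := Real.sqrt_pos.mpr hcardpos
  -- the orthonormal family
  set w : Option (ιa × ιb) → ((Fin da × Fin db) × (Fin da × Fin db)) × Bool → ℝ :=
    fun o => Option.elim o (fun x => s⁻¹ * toR (1 : Matrix (Fin da × Fin db) (Fin da × Fin db) ℂ) x)
      (fun ij x => (1/2) * toR (lamA ij.1 ⊗ₖ lamB ij.2) x) with hw
  have hkherm : ∀ i j, (lamA i ⊗ₖ lamB j).IsHermitian :=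
    fun i j => kron_herm (hAherm i) (hBherm j)
  have htrkk : ∀ i j k m, ((lamA i ⊗ₖ lamB j)ᴴ * (lamA k ⊗ₖ lamB m)).trace
      = (if i = k then (2:ℂ) else 0) * (if j = m then 2 else 0) := by
    intro i j k m
    rw [(hkherm i j).eq, ← Matrix.mul_kronecker_mul, Matrix.trace_kronecker,
      hAorth, hBorth]
  have htrone : ((1 : Matrix (Fin da × Fin db) (Fin da × Fin db) ℂ)ᴴ * (1 : Matrix (Fin da × Fin db) (Fin da × Fin db) ℂ)).trace = ((da : ℂ) * db) := by
    rw [Matrix.conjTranspose_one, Matrix.one_mul, Matrix.trace_one]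
    simp [Fintype.card_prod, Fintype.card_fin]
  have htronek : ∀ k m, ((1 : Matrix (Fin da × Fin db) (Fin da × Fin db) ℂ)ᴴ * (lamA k ⊗ₖ lamB m)).trace = 0 := by
    intro k m
    rw [Matrix.conjTranspose_one, Matrix.one_mul, Matrix.trace_kronecker, hAtr, zero_mul]
  have horth : ∀ j k, j ≠ k → ∑ x, w j x * w k x = 0 := by
    rintro (_ | ⟨i1, j1⟩) (_ | ⟨i2, j2⟩) hne
    · exact absurd rfl hne
    · rw [hw]
      simp only [Option.elim]
      rw [ip_smul, htronek]
      simp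
    · rw [hw]
      simp only [Option.elim]
      rw [ip_smul]
      have : ((lamA i1 ⊗ₖ lamB j1)ᴴ * (1 : Matrix (Fin da × Fin db) (Fin da × Fin db) ℂ)).trace = 0 := by
        rw [(hkherm i1 j1).eq, Matrix.mul_one, Matrix.trace_kronecker, hAtr, zero_mul]
      rw [this]
      simp
    · rw [hw]
      simp only [Option.elim]
      rw [ip_smul, htrkk]
      have hne2 : i1 ≠ i2 ∨ j1 ≠ j2 := by
        by_contra h
        push_neg at h
        exact hne (by rw [h.1, h.2])
      rcases hne2 with h | h
      · rw [if_neg h, zero_mul]; simp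
      · rw [if_neg h, mul_zero]; simp
  have hnorm : ∀ k, ∑ x, (w k x)^2 ≤ 1 := by
    rintro (_ | ⟨i, j⟩)
    · rw [hw]
      simp only [Option.elim]
      have : ∑ x, (s⁻¹ * toR (1 : Matrix (Fin da × Fin db) (Fin da × Fin db) ℂ) x)^2
          = s⁻¹ * s⁻¹ * (((1 : Matrix (Fin da × Fin db) (Fin da × Fin db) ℂ)ᴴ * 1).trace).re := by
        rw [← ip_smul]
        exact Finset.sum_congr rfl fun x _ => by ring
      rw [this, htrone]
      have hre : ((da : ℂ) * db).re = (da : ℝ) * db := by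
        rw [← Complex.ofReal_natCast, ← Complex.ofReal_natCast, ← Complex.ofReal_mul,
          Complex.ofReal_re]
      rw [hre]
      have hss : s * s = (da : ℝ) * db := Real.mul_self_sqrt (le_of_lt hcardpos)
      have : s⁻¹ * s⁻¹ * ((da:ℝ)*db) = 1 := by
        rw [← mul_inv, hss]
        field_simp
      rw [this]
    · rw [hw]
      simp only [Option.elim]
      have : ∑ x, ((1/2 : ℝ) * toR (lamA i ⊗ₖ lamB j) x)^2
          = (1/2 : ℝ) * (1/2) * (((lamA i ⊗ₖ lamB j)ᴴ * (lamA i ⊗ₖ lamB j)).trace).re := by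
        rw [← ip_smul]
        exact Finset.sum_congr rfl fun x _ => by ring
      rw [this, htrkk]
      norm_num
  have hbessel := bessel_raw w (toR σ) horth hnorm
  have hher := hσ.1
  have hu2 : ∑ x, (toR σ x)^2 = ((σᴴ * σ).trace).re := by
    rw [← ip_eq]
    exact Finset.sum_congr rfl fun x _ => by rw [sq]
  have hpur : ((σᴴ * σ).trace).re ≤ 1 := purity_le_one hσ hσtr
  have hcn : ∑ x, toR σ x * w none x = s⁻¹ := by
    rw [hw]
    simp only [Option.elim]
    rw [ip_smul', Matrix.mul_one, Matrix.trace_conjTranspose, hσtr]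
    simp
  have hcs : ∀ ij : ιa × ιb, ∑ x, toR σ x * w (some ij) x
      = (1/2) * ((σ * (lamA ij.1 ⊗ₖ lamB ij.2)).trace).re := by
    intro ij
    rw [hw]
    simp only [Option.elim]
    rw [ip_smul', hher.eq]
  rw [Fintype.sum_option, hu2] at hbessel
  have hsq : (∑ x, toR σ x * w none x)^2 = ((da : ℝ) * db)⁻¹ := by
    rw [hcn, inv_pow, Real.sq_sqrt (le_of_lt hcardpos)]
  rw [hsq] at hbessel
  have hsum : ∑ ij : ιa × ιb, (∑ x, toR σ x * w (some ij) x)^2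
      = (1/4) * ∑ i, ∑ j, (((σ * (lamA i ⊗ₖ lamB j)).trace).re)^2 := by
    rw [Fintype.sum_prod_type, Finset.mul_sum]
    refine Finset.sum_congr rfl fun i _ => ?_
    rw [Finset.mul_sum]
    refine Finset.sum_congr rfl fun j _ => ?_
    rw [hcs (i, j)]
    ring
  rw [hsum] at hbessel
  have h4 : (4:ℝ)/((da : ℝ) * db) = 4 * ((da : ℝ) * db)⁻¹ := by ring
  rw [h4]
  linarith [hpur]

set_option maxHeartbeats 2000000 in
/-- if a four-partite state ρ (with d_f ≤ d_g and d_h ≤ d_e) is separable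
under the bipartition fg|he, then ‖S(ρ_{fg|he})‖_tr ≤ √((5d_g²−4)(5d_e²−4))/(d_g d_e). -/
theorem sep_fg_he_trace_norm_bound
    (df dg dh de : ℕ) (hdf : 2 ≤ df) (hdh : 2 ≤ dh) (hfg : df ≤ dg) (hhe : dh ≤ de)
    (lamf : Fin (df ^ 2 - 1) → Matrix (Fin df) (Fin df) ℂ)
    (lamg : Fin (dg ^ 2 - 1) → Matrix (Fin dg) (Fin dg) ℂ)
    (lamh : Fin (dh ^ 2 - 1) → Matrix (Fin dh) (Fin dh) ℂ)
    (lame : Fin (de ^ 2 - 1) → Matrix (Fin de) (Fin de) ℂ)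
    (hfherm : ∀ i, (lamf i).IsHermitian) (hftr : ∀ i, (lamf i).trace = 0)
    (hforth : ∀ i j, (lamf i * lamf j).trace = if i = j then 2 else 0)
    (hgherm : ∀ i, (lamg i).IsHermitian) (hgtr : ∀ i, (lamg i).trace = 0)
    (hgorth : ∀ i j, (lamg i * lamg j).trace = if i = j then 2 else 0)
    (hhherm : ∀ i, (lamh i).IsHermitian) (hhtr : ∀ i, (lamh i).trace = 0)
    (hhorth : ∀ i j, (lamh i * lamh j).trace = if i = j then 2 else 0)
    (heherm : ∀ i, (lame i).IsHermitian) (hetr : ∀ i, (lame i).trace = 0)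
    (heorth : ∀ i j, (lame i * lame j).trace = if i = j then 2 else 0)
    (ρ : Matrix ((Fin df × Fin dg) × Fin dh × Fin de) ((Fin df × Fin dg) × Fin dh × Fin de) ℂ)
    (L : ℕ) (p : Fin L → ℝ) (hp : ∀ l, 0 < p l) (hpsum : ∑ l, p l = 1)
    (σfg : Fin L → Matrix (Fin df × Fin dg) (Fin df × Fin dg) ℂ)
    (hσfg : ∀ l, (σfg l).PosSemidef ∧ (σfg l).trace = 1)
    (σhe : Fin L → Matrix (Fin dh × Fin de) (Fin dh × Fin de) ℂ)
    (hσhe : ∀ l, (σhe l).PosSemidef ∧ (σhe l).trace = 1)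
    (hsep : ρ = ∑ l, (p l : ℂ) • (σfg l ⊗ₖ σhe l)) :
    traceNorm (Matrix.of fun (i : Option (Fin (df ^ 2 - 1) × Fin (dg ^ 2 - 1)))
        (j : Option (Fin (dh ^ 2 - 1) × Fin (de ^ 2 - 1))) =>
      match i, j with
      | none, none => (1 : ℝ)
      | none, some (k, m) =>
          Complex.re ((ρ * (((1 : Matrix (Fin df) (Fin df) ℂ) ⊗ₖ (1 : Matrix (Fin dg) (Fin dg) ℂ)) ⊗ₖ (lamh k ⊗ₖ lame m))).trace)
      | some (i, j), none =>
          Complex.re ((ρ * ((lamf i ⊗ₖ lamg j) ⊗ₖ ((1 : Matrix (Fin dh) (Fin dh) ℂ) ⊗ₖ (1 : Matrix (Fin de) (Fin de) ℂ)))).trace)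
      | some (i, j), some (k, m) =>
          Complex.re ((ρ * ((lamf i ⊗ₖ lamg j) ⊗ₖ (lamh k ⊗ₖ lame m))).trace))
      ≤ Real.sqrt ((5 * (dg : ℝ) ^ 2 - 4) * (5 * (de : ℝ) ^ 2 - 4)) / ((dg : ℝ) * (de : ℝ)) := by
  -- basic positivity facts
  have hdg2 : (2:ℝ) ≤ (dg:ℝ) := by exact_mod_cast le_trans hdf hfg
  have hde2 : (2:ℝ) ≤ (de:ℝ) := by exact_mod_cast le_trans hdh hhe
  have hdf2 : (2:ℝ) ≤ (df:ℝ) := by exact_mod_cast hdf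
  have hdh2 : (2:ℝ) ≤ (dh:ℝ) := by exact_mod_cast hdh
  have hdgpos : (0:ℝ) < dg := by linarith
  have hdepos : (0:ℝ) < de := by linarith
  -- correlation vectors
  set uu : Fin L → Option (Fin (df ^ 2 - 1) × Fin (dg ^ 2 - 1)) → ℝ :=
    fun l o => Option.elim o 1
      (fun ij => ((σfg l * (lamf ij.1 ⊗ₖ lamg ij.2)).trace).re) with huu
  set vv : Fin L → Option (Fin (dh ^ 2 - 1) × Fin (de ^ 2 - 1)) → ℝ :=
    fun l o => Option.elim o 1
      (fun km => ((σhe l * (lamh km.1 ⊗ₖ lame km.2)).trace).re) with hvv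
  -- realness of individual traces
  have hfgreal : ∀ l i j, (σfg l * (lamf i ⊗ₖ lamg j)).trace
      = ((((σfg l * (lamf i ⊗ₖ lamg j)).trace).re : ℝ) : ℂ) :=
    fun l i j => trace_mul_herm_real (hσfg l).1.1 (kron_herm (hfherm i) (hgherm j))
  have hhereal : ∀ l k m, (σhe l * (lamh k ⊗ₖ lame m)).trace
      = ((((σhe l * (lamh k ⊗ₖ lame m)).trace).re : ℝ) : ℂ) :=
    fun l k m => trace_mul_herm_real (hσhe l).1.1 (kron_herm (hhherm k) (heherm m))
  -- general decomposition of full correlations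
  have hmain : ∀ (X : Matrix (Fin df × Fin dg) (Fin df × Fin dg) ℂ)
      (Y : Matrix (Fin dh × Fin de) (Fin dh × Fin de) ℂ),
      ((ρ * (X ⊗ₖ Y)).trace).re
        = ∑ l, p l * ((σfg l * X).trace * ((σhe l * Y).trace)).re := by
    intro X Y
    rw [hsep, Matrix.sum_mul, Matrix.trace_sum, Complex.re_sum]
    refine Finset.sum_congr rfl fun l _ => ?_
    rw [Matrix.smul_mul, Matrix.trace_smul]
    have h1 : ((σfg l ⊗ₖ σhe l) * (X ⊗ₖ Y)).trace
        = (σfg l * X).trace * (σhe l * Y).trace := by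
      rw [← Matrix.mul_kronecker_mul, Matrix.trace_kronecker]
    rw [h1]
    simp [smul_eq_mul, Complex.mul_re]
  -- the matrix equals a sum of rank-one terms
  have hMeq : (Matrix.of fun (i : Option (Fin (df ^ 2 - 1) × Fin (dg ^ 2 - 1)))
        (j : Option (Fin (dh ^ 2 - 1) × Fin (de ^ 2 - 1))) =>
      match i, j with
      | none, none => (1 : ℝ)
      | none, some (k, m) =>
          Complex.re ((ρ * (((1 : Matrix (Fin df) (Fin df) ℂ) ⊗ₖ (1 : Matrix (Fin dg) (Fin dg) ℂ)) ⊗ₖ (lamh k ⊗ₖ lame m))).trace)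
      | some (i, j), none =>
          Complex.re ((ρ * ((lamf i ⊗ₖ lamg j) ⊗ₖ ((1 : Matrix (Fin dh) (Fin dh) ℂ) ⊗ₖ (1 : Matrix (Fin de) (Fin de) ℂ)))).trace)
      | some (i, j), some (k, m) =>
          Complex.re ((ρ * ((lamf i ⊗ₖ lamg j) ⊗ₖ (lamh k ⊗ₖ lame m))).trace))
      = ∑ l, p l • Matrix.vecMulVec (uu l) (vv l) := by
    ext i j
    have hrhs : (∑ l, p l • Matrix.vecMulVec (uu l) (vv l)) i j
        = ∑ l, p l * (uu l i * vv l j) := by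
      rw [Matrix.sum_apply]
      exact Finset.sum_congr rfl fun l _ => by
        simp [Matrix.vecMulVec_apply, mul_assoc]
    rw [hrhs]
    obtain (_ | ⟨i1, j1⟩) := i <;> obtain (_ | ⟨k1, m1⟩) := j
    · simp only [Matrix.of_apply, huu, hvv, Option.elim]
      trans ∑ l : Fin L, p l
      · exact hpsum.symm
      · exact Finset.sum_congr rfl fun l _ => by ring
    · simp only [Matrix.of_apply, huu, hvv, Option.elim]
      rw [Matrix.one_kronecker_one, hmain]
      refine Finset.sum_congr rfl fun l _ => ?_
      rw [Matrix.mul_one, (hσfg l).2, one_mul, hhereal l k1 m1, Complex.ofReal_re]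
      ring
    · simp only [Matrix.of_apply, huu, hvv, Option.elim]
      rw [Matrix.one_kronecker_one, hmain]
      refine Finset.sum_congr rfl fun l _ => ?_
      rw [Matrix.mul_one, (hσhe l).2, mul_one, hfgreal l i1 j1, Complex.ofReal_re]
      ring
    · simp only [Matrix.of_apply, huu, hvv, Option.elim]
      rw [hmain]
      refine Finset.sum_congr rfl fun l _ => ?_
      rw [hfgreal l i1 j1, hhereal l k1 m1, ← Complex.ofReal_mul, Complex.ofReal_re]
      simp [Complex.ofReal_re]
  -- norm bounds on the correlation vectors
  have hub : ∀ l, ∑ o, (uu l o)^2 ≤ (5*(dg:ℝ)^2 - 4)/(dg:ℝ)^2 := by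
    intro l
    have hT := bip_bound (Nat.lt_of_lt_of_le Nat.zero_lt_two hdf)
      (Nat.lt_of_lt_of_le (Nat.lt_of_lt_of_le Nat.zero_lt_two hdf) hfg)
      lamf lamg hfherm hftr hforth hgherm hgtr hgorth (σfg l) (hσfg l).1 (hσfg l).2
    have hsum : ∑ o, (uu l o)^2
        = 1 + ∑ i, ∑ j, (((σfg l * (lamf i ⊗ₖ lamg j)).trace).re)^2 := by
      rw [Fintype.sum_option]
      simp only [huu, Option.elim, one_pow]
      rw [Fintype.sum_prod_type]
    rw [hsum]
    have hfg' : (df:ℝ) ≤ (dg:ℝ) := by exact_mod_cast hfg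
    have h1 : (4:ℝ)/((dg:ℝ)*dg) ≤ 4/((df:ℝ)*dg) := by
      apply div_le_div_of_nonneg_left (by norm_num) (by nlinarith) (by nlinarith)
    have h2 : (5*(dg:ℝ)^2 - 4)/(dg:ℝ)^2 = 5 - 4/((dg:ℝ)*dg) := by
      field_simp
    rw [h2]
    linarith
  have hvb : ∀ l, ∑ o, (vv l o)^2 ≤ (5*(de:ℝ)^2 - 4)/(de:ℝ)^2 := by
    intro l
    have hT := bip_bound (Nat.lt_of_lt_of_le Nat.zero_lt_two hdh)
      (Nat.lt_of_lt_of_le (Nat.lt_of_lt_of_le Nat.zero_lt_two hdh) hhe)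
      lamh lame hhherm hhtr hhorth heherm hetr heorth (σhe l) (hσhe l).1 (hσhe l).2
    have hsum : ∑ o, (vv l o)^2
        = 1 + ∑ i, ∑ j, (((σhe l * (lamh i ⊗ₖ lame j)).trace).re)^2 := by
      rw [Fintype.sum_option]
      simp only [hvv, Option.elim, one_pow]
      rw [Fintype.sum_prod_type]
    rw [hsum]
    have hhe' : (dh:ℝ) ≤ (de:ℝ) := by exact_mod_cast hhe
    have h1 : (4:ℝ)/((de:ℝ)*de) ≤ 4/((dh:ℝ)*de) := by
      apply div_le_div_of_nonneg_left (by norm_num) (by nlinarith) (by nlinarith)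
    have h2 : (5*(de:ℝ)^2 - 4)/(de:ℝ)^2 = 5 - 4/((de:ℝ)*de) := by
      field_simp
    rw [h2]
    linarith
  -- constants
  have hg0 : (0:ℝ) ≤ 5*(dg:ℝ)^2 - 4 := by nlinarith
  have he0 : (0:ℝ) ≤ 5*(de:ℝ)^2 - 4 := by nlinarith
  have hCg : Real.sqrt ((5*(dg:ℝ)^2 - 4)/(dg:ℝ)^2) = Real.sqrt (5*(dg:ℝ)^2 - 4)/(dg:ℝ) := by
    rw [Real.sqrt_div hg0, Real.sqrt_sq (le_of_lt hdgpos)]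
  have hCe : Real.sqrt ((5*(de:ℝ)^2 - 4)/(de:ℝ)^2) = Real.sqrt (5*(de:ℝ)^2 - 4)/(de:ℝ) := by
    rw [Real.sqrt_div he0, Real.sqrt_sq (le_of_lt hdepos)]
  calc traceNorm (Matrix.of fun (i : Option (Fin (df ^ 2 - 1) × Fin (dg ^ 2 - 1)))
        (j : Option (Fin (dh ^ 2 - 1) × Fin (de ^ 2 - 1))) =>
      match i, j with
      | none, none => (1 : ℝ)
      | none, some (k, m) =>
          Complex.re ((ρ * (((1 : Matrix (Fin df) (Fin df) ℂ) ⊗ₖ (1 : Matrix (Fin dg) (Fin dg) ℂ)) ⊗ₖ (lamh k ⊗ₖ lame m))).trace)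
      | some (i, j), none =>
          Complex.re ((ρ * ((lamf i ⊗ₖ lamg j) ⊗ₖ ((1 : Matrix (Fin dh) (Fin dh) ℂ) ⊗ₖ (1 : Matrix (Fin de) (Fin de) ℂ)))).trace)
      | some (i, j), some (k, m) =>
          Complex.re ((ρ * ((lamf i ⊗ₖ lamg j) ⊗ₖ (lamh k ⊗ₖ lame m))).trace))
      = traceNorm (∑ l, p l • Matrix.vecMulVec (uu l) (vv l)) := by rw [hMeq]
    _ ≤ ∑ l, p l * Real.sqrt (∑ o, (uu l o)^2) * Real.sqrt (∑ o, (vv l o)^2) :=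
        traceNorm_le_of_decomp p (fun l => (hp l).le) uu vv
    _ ≤ ∑ l, p l * (Real.sqrt (5*(dg:ℝ)^2 - 4)/(dg:ℝ))
          * (Real.sqrt (5*(de:ℝ)^2 - 4)/(de:ℝ)) := by
        refine Finset.sum_le_sum fun l _ => ?_
        have h1 : Real.sqrt (∑ o, (uu l o)^2) ≤ Real.sqrt (5*(dg:ℝ)^2 - 4)/(dg:ℝ) := by
          rw [← hCg]; exact Real.sqrt_le_sqrt (hub l)
        have h2 : Real.sqrt (∑ o, (vv l o)^2) ≤ Real.sqrt (5*(de:ℝ)^2 - 4)/(de:ℝ) := by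
          rw [← hCe]; exact Real.sqrt_le_sqrt (hvb l)
        have hp1 : 0 ≤ p l * Real.sqrt (∑ o, (uu l o)^2) :=
          mul_nonneg (hp l).le (Real.sqrt_nonneg _)
        calc p l * Real.sqrt (∑ o, (uu l o)^2) * Real.sqrt (∑ o, (vv l o)^2)
            ≤ p l * Real.sqrt (∑ o, (uu l o)^2) * (Real.sqrt (5*(de:ℝ)^2 - 4)/(de:ℝ)) :=
              mul_le_mul_of_nonneg_left h2 hp1
          _ ≤ p l * (Real.sqrt (5*(dg:ℝ)^2 - 4)/(dg:ℝ))
                * (Real.sqrt (5*(de:ℝ)^2 - 4)/(de:ℝ)) := by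
              apply mul_le_mul_of_nonneg_right _ (by positivity)
              exact mul_le_mul_of_nonneg_left h1 (hp l).le
    _ = Real.sqrt ((5 * (dg : ℝ) ^ 2 - 4) * (5 * (de : ℝ) ^ 2 - 4)) / ((dg : ℝ) * (de : ℝ)) := by
        rw [← Finset.sum_mul, ← Finset.sum_mul, hpsum, one_mul]
        rw [Real.sqrt_mul hg0]
        field_simp
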